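/- For every d ≥ 2 and t > 0 there exists a constant C such that for all j ≥ 0 and all x on the unit sphere S^{d-1}, the integral over S^{d-1} of d(x,y)^t / (1 + 2^j d(x,y))^{d+t} with respect to the normalized surface measure is at most C · 2^{-j(t+d-1)}, where d(x,y) is the geodesic distance. -/

import Mathlib

open MeasureTheory Metric Set Real
open scoped Pointwise ENNReal

/-- The surface measure on the unit sphere `S^{d-1} ⊂ ℝ^d` (total mass `ω_{d-1}`). -/
noncomputable def sphereMeasure (d : ℕ) :
    Measure (sphere (0 : EuclideanSpace ℝ (Fin d)) 1) :=
  (volume : Measure (EuclideanSpace ℝ (Fin d))).toSphere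

/-- The geodesic distance `d(x,y) = arccos (x ⬝ y)` on the unit sphere. -/
noncomputable def geodesicDist {d : ℕ} (x y : sphere (0 : EuclideanSpace ℝ (Fin d)) 1) : ℝ :=
  Real.arccos (inner (𝕜 := ℝ) (x : EuclideanSpace ℝ (Fin d)) (y : EuclideanSpace ℝ (Fin d)))

lemma volume_box (d : ℕ) (s : Fin d → Set ℝ) (hs : ∀ i, MeasurableSet (s i)) :
    (volume : Measure (EuclideanSpace ℝ (Fin d))) {z | ∀ i, z i ∈ s i} = ∏ i, volume (s i) := by
  have h1 : {z : EuclideanSpace ℝ (Fin d) | ∀ i, z i ∈ s i}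
      = (MeasurableEquiv.toLp 2 (Fin d → ℝ)).symm ⁻¹' (Set.pi Set.univ s) := by
    ext z; simp [Set.mem_pi]
  rw [h1, (EuclideanSpace.volume_preserving_symm_measurableEquiv_toLp (Fin d)).measure_preimage
    (MeasurableSet.univ_pi hs).nullMeasurableSet, volume_pi_pi]

lemma measurableSet_box (d : ℕ) (s : Fin d → Set ℝ) (hs : ∀ i, MeasurableSet (s i)) :
    MeasurableSet {z : EuclideanSpace ℝ (Fin d) | ∀ i, z i ∈ s i} := by
  have h1 : {z : EuclideanSpace ℝ (Fin d) | ∀ i, z i ∈ s i}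
      = (MeasurableEquiv.toLp 2 (Fin d → ℝ)).symm ⁻¹' (Set.pi Set.univ s) := by
    ext z; simp [Set.mem_pi]
  rw [h1]
  exact (MeasurableEquiv.toLp 2 (Fin d → ℝ)).symm.measurable (MeasurableSet.univ_pi hs)

lemma continuous_geodesicDist {d : ℕ} (x : sphere (0 : EuclideanSpace ℝ (Fin d)) 1) :
    Continuous (geodesicDist x) :=
  Real.continuous_arccos.comp (Continuous.inner continuous_const continuous_subtype_val)

lemma cap_bound (d : ℕ) (hd : 2 ≤ d) (x : sphere (0 : EuclideanSpace ℝ (Fin d)) 1)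
    (r : ℝ) (hr : 0 < r) :
    sphereMeasure d {y | geodesicDist x y ≤ r}
      ≤ ENNReal.ofReal ((d * 2 ^ d) * r ^ (d - 1)) := by
  haveI : NeZero d := ⟨by omega⟩
  have hmeas : MeasurableSet {y | geodesicDist x y ≤ r} :=
    (isClosed_le (continuous_geodesicDist x) continuous_const).measurableSet
  have hdim : Module.finrank ℝ (EuclideanSpace ℝ (Fin d)) = d := finrank_euclideanSpace_fin
  rcases le_or_gt (π/2) r with hbig | hsmall
  · -- big radius: bound by total measure
    have h1 : sphereMeasure d {y | geodesicDist x y ≤ r} ≤ sphereMeasure d Set.univ :=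
      measure_mono (subset_univ _)
    have h2 : sphereMeasure d Set.univ
        = d * (volume : Measure (EuclideanSpace ℝ (Fin d))) (ball 0 1) := by
      rw [sphereMeasure, Measure.toSphere_apply_univ, hdim]
    have h3 : (volume : Measure (EuclideanSpace ℝ (Fin d))) (ball 0 1)
        ≤ ENNReal.ofReal (2 ^ d) := by
      have hsub : (ball (0 : EuclideanSpace ℝ (Fin d)) 1)
          ⊆ {z : EuclideanSpace ℝ (Fin d) | ∀ i, z i ∈ Icc (-1 : ℝ) 1} := by
        intro z hz i
        have : |z i| ≤ ‖z‖ := by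
          have := EuclideanSpace.norm_eq z
          have h4 : |z i| = Real.sqrt ((z i) ^ 2) := (Real.sqrt_sq_eq_abs _).symm
          rw [this, h4]
          apply Real.sqrt_le_sqrt
          calc (z i) ^ 2 ≤ ∑ j, (z j) ^ 2 :=
              Finset.single_le_sum (f := fun j => (z j) ^ 2)
                (fun j _ => sq_nonneg _) (Finset.mem_univ i)
            _ = ∑ j, ‖z j‖ ^ 2 := by simp [sq_abs]
        have hz1 : ‖z‖ < 1 := by simpa [mem_ball, dist_eq_norm] using hz
        exact abs_le.mp (this.trans hz1.le)
      calc (volume : Measure (EuclideanSpace ℝ (Fin d))) (ball 0 1)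
          ≤ volume {z : EuclideanSpace ℝ (Fin d) | ∀ i, z i ∈ Icc (-1 : ℝ) 1} :=
            measure_mono hsub
        _ = ∏ _i : Fin d, volume (Icc (-1 : ℝ) 1) := volume_box d _ (fun _ => measurableSet_Icc)
        _ = ENNReal.ofReal (2 ^ d) := by
            simp [Real.volume_Icc, Finset.prod_const, ← ENNReal.ofReal_pow]
            norm_num
    calc sphereMeasure d {y | geodesicDist x y ≤ r}
        ≤ d * ENNReal.ofReal (2 ^ d) := h1.trans (h2.le.trans (by gcongr))
      _ = ENNReal.ofReal (d * 2 ^ d) := by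
          rw [← ENNReal.ofReal_natCast d, ← ENNReal.ofReal_mul (by positivity)]
      _ ≤ ENNReal.ofReal ((d * 2 ^ d) * r ^ (d - 1)) := by
          apply ENNReal.ofReal_le_ofReal
          have hr1 : (1:ℝ) ≤ r := by nlinarith [Real.pi_gt_three]
          exact le_mul_of_one_le_right (by positivity) (one_le_pow₀ hr1)
  · -- small radius: cone argument
    have hrpi : r ≤ π := by linarith [Real.pi_pos]
    have hcard : Module.finrank ℝ (EuclideanSpace ℝ (Fin d)) = Fintype.card (Fin d) := by
      simp [hdim]
    have hxnorm : ‖(x : EuclideanSpace ℝ (Fin d))‖ = 1 := by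
      simpa using mem_sphere_zero_iff_norm.mp x.2
    have horth : Orthonormal ℝ (({0} : Set (Fin d)).restrict
        (fun _ : Fin d => (x : EuclideanSpace ℝ (Fin d)))) := by
      constructor
      · intro i; simp [Set.restrict, hxnorm]
      · intro i j hij
        exact absurd (Subtype.ext ((mem_singleton_iff.mp i.2).trans
          (mem_singleton_iff.mp j.2).symm)) hij
    obtain ⟨b, hb⟩ := horth.exists_orthonormalBasis_extension_of_card_eq hcard
    have hb0 : b 0 = (x : EuclideanSpace ℝ (Fin d)) := hb 0 (mem_singleton 0)
    set S : Fin d → Set ℝ := fun i => if i = 0 then Icc (0:ℝ) 1 else Icc (-r) r with hS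
    have hSmeas : ∀ i, MeasurableSet (S i) := by
      intro i; by_cases h : i = 0 <;> simp [hS, h]
    have hcospos : 0 < Real.cos r := Real.cos_pos_of_mem_Ioo ⟨by linarith, hsmall⟩
    -- the cone over the cap is contained in a box
    have hsub : (Ioo (0:ℝ) 1) • ((↑) '' {y | geodesicDist x y ≤ r})
        ⊆ b.repr ⁻¹' {z : EuclideanSpace ℝ (Fin d) | ∀ i, z i ∈ S i} := by
      rintro z hz
      rw [Set.mem_smul] at hz
      obtain ⟨c, hc, w, hw, rfl⟩ := hz
      obtain ⟨y, hy, rfl⟩ := hw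
      have hynorm : ‖(y : EuclideanSpace ℝ (Fin d))‖ = 1 := by
        simpa using mem_sphere_zero_iff_norm.mp y.2
      set v : ℝ := inner (𝕜 := ℝ) (x : EuclideanSpace ℝ (Fin d)) (y : EuclideanSpace ℝ (Fin d))
        with hv
      have hv1 : |v| ≤ 1 := by
        have := abs_real_inner_le_norm (x : EuclideanSpace ℝ (Fin d))
          (y : EuclideanSpace ℝ (Fin d))
        rwa [hxnorm, hynorm, one_mul] at this
      have hyr : Real.arccos v ≤ r := hy
      have hvcos : Real.cos r ≤ v := by
        have h1 := Real.cos_le_cos_of_nonneg_of_le_pi (Real.arccos_nonneg v) hrpi hyr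
        rwa [Real.cos_arccos (by linarith [abs_le.mp hv1]) (by linarith [abs_le.mp hv1])] at h1
      -- Parseval
      have hsum : ∑ i, (b.repr (y : EuclideanSpace ℝ (Fin d)) i) ^ 2 = 1 := by
        have h1 : ‖b.repr (y : EuclideanSpace ℝ (Fin d))‖ = 1 := by
          rw [LinearIsometryEquiv.norm_map]; exact hynorm
        have h2 := EuclideanSpace.norm_eq (b.repr (y : EuclideanSpace ℝ (Fin d)))
        rw [h1] at h2
        have h4 : ∑ i, ‖b.repr (y : EuclideanSpace ℝ (Fin d)) i‖ ^ 2 = 1 :=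
          Real.sqrt_eq_one.mp h2.symm
        simpa [Real.norm_eq_abs, sq_abs] using h4
      have hrepr0 : b.repr (y : EuclideanSpace ℝ (Fin d)) 0 = v := by
        rw [b.repr_apply_apply, hb0, hv, real_inner_comm]
      intro i
      have hreprsmul : b.repr (c • (y : EuclideanSpace ℝ (Fin d))) i
          = c * b.repr (y : EuclideanSpace ℝ (Fin d)) i := by
        rw [LinearIsometryEquiv.map_smul]; rfl
      by_cases hi : i = 0
      · subst hi
        rw [hreprsmul, hrepr0]
        simp only [hS, if_pos rfl, mem_Icc]
        constructor
        · exact mul_nonneg hc.1.le (by linarith)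
        · nlinarith [hc.1, hc.2, abs_le.mp hv1]
      · -- perpendicular coordinate
        set a : ℝ := b.repr (y : EuclideanSpace ℝ (Fin d)) i with ha
        have hpair : v ^ 2 + a ^ 2 ≤ 1 := by
          have h5 : v ^ 2 + a ^ 2
              = ∑ k ∈ ({0, i} : Finset (Fin d)), (b.repr (y : EuclideanSpace ℝ (Fin d)) k) ^ 2 := by
            rw [Finset.sum_pair (Ne.symm hi), hrepr0]
          rw [h5]
          calc ∑ k ∈ ({0, i} : Finset (Fin d)), (b.repr (y : EuclideanSpace ℝ (Fin d)) k) ^ 2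
              ≤ ∑ k, (b.repr (y : EuclideanSpace ℝ (Fin d)) k) ^ 2 :=
                Finset.sum_le_sum_of_subset_of_nonneg (Finset.subset_univ _)
                  (fun k _ _ => sq_nonneg _)
            _ = 1 := hsum
        have hsq : a ^ 2 ≤ r ^ 2 := by
          have h6 : Real.cos r ^ 2 ≤ v ^ 2 := by nlinarith
          have h7 := Real.sin_sq r
          have h8 : Real.sin r ≤ r := Real.sin_le hr.le
          have h9 : 0 ≤ Real.sin r := Real.sin_nonneg_of_nonneg_of_le_pi hr.le hrpi
          nlinarith
        have habs : |a| ≤ r := by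
          rw [← Real.sqrt_sq_eq_abs]
          calc Real.sqrt (a ^ 2) ≤ Real.sqrt (r ^ 2) := Real.sqrt_le_sqrt hsq
            _ = r := Real.sqrt_sq hr.le
        rw [hreprsmul]
        simp only [hS, if_neg hi, mem_Icc, ← abs_le]
        calc |c * a| = |c| * |a| := abs_mul c a
          _ ≤ 1 * r := by
              apply mul_le_mul _ habs (abs_nonneg a) zero_le_one
              rw [abs_of_pos hc.1]; exact hc.2.le
          _ = r := one_mul r
    -- measure computation
    have hvol : (volume : Measure (EuclideanSpace ℝ (Fin d)))
        (b.repr ⁻¹' {z : EuclideanSpace ℝ (Fin d) | ∀ i, z i ∈ S i})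
        = ENNReal.ofReal (2 * r) ^ (d - 1) := by
      rw [b.measurePreserving_repr.measure_preimage
        (measurableSet_box d S hSmeas).nullMeasurableSet, volume_box d S hSmeas]
      have h10 : ∀ i : Fin d, volume (S i) = if i = 0 then 1 else ENNReal.ofReal (2 * r) := by
        intro i
        by_cases h : i = 0
        · simp [hS, h, Real.volume_Icc]
        · simp only [hS, if_neg h, Real.volume_Icc, sub_neg_eq_add, two_mul]
      calc ∏ i, volume (S i) = ∏ i, (if i = 0 then 1 else ENNReal.ofReal (2 * r)) :=
          Finset.prod_congr rfl (fun i _ => h10 i)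
        _ = (if (0 : Fin d) = 0 then 1 else ENNReal.ofReal (2 * r))
            * ∏ i ∈ (Finset.univ.erase (0 : Fin d)), (if i = 0 then 1 else ENNReal.ofReal (2 * r)) :=
          (Finset.mul_prod_erase _ _ (Finset.mem_univ 0)).symm
        _ = ∏ i ∈ (Finset.univ.erase (0 : Fin d)), ENNReal.ofReal (2 * r) := by
            rw [if_pos rfl, one_mul]
            exact Finset.prod_congr rfl (fun i hi => if_neg (Finset.ne_of_mem_erase hi))
        _ = ENNReal.ofReal (2 * r) ^ (d - 1) := by
            rw [Finset.prod_const, Finset.card_erase_of_mem (Finset.mem_univ 0),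
              Finset.card_univ, Fintype.card_fin]
    calc sphereMeasure d {y | geodesicDist x y ≤ r}
        = d * (volume : Measure (EuclideanSpace ℝ (Fin d)))
            ((Ioo (0:ℝ) 1) • ((↑) '' {y | geodesicDist x y ≤ r})) := by
          rw [sphereMeasure, Measure.toSphere_apply' _ hmeas, hdim]
      _ ≤ d * ENNReal.ofReal (2 * r) ^ (d - 1) := by
          rw [← hvol]; exact mul_le_mul_right (measure_mono hsub) _
      _ ≤ ENNReal.ofReal ((d * 2 ^ d) * r ^ (d - 1)) := by
          rw [← ENNReal.ofReal_pow (by positivity), ← ENNReal.ofReal_natCast d,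
            ← ENNReal.ofReal_mul (by positivity)]
          apply ENNReal.ofReal_le_ofReal
          have h2 : (2:ℝ) ^ (d-1) ≤ 2 ^ d := pow_le_pow_right₀ (by norm_num) (Nat.sub_le d 1)
          have h3 : (0:ℝ) ≤ r ^ (d-1) := pow_nonneg hr.le _
          have h4 : (0:ℝ) ≤ (d:ℝ) := Nat.cast_nonneg d
          rw [mul_pow]
          nlinarith [mul_le_mul_of_nonneg_right h2 h3]

/-- For every `d ≥ 2` and `t > 0` there is a constant `C` such that for all `j ≥ 0` and
`x ∈ S^{d-1}`, `∫ d(x,y)^t / (1 + 2^j d(x,y))^{d+t} dy ≤ C ⬝ 2^{-j(t+d-1)}`. -/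
theorem integral_geodesic_kernel_le (d : ℕ) (hd : 2 ≤ d) (t : ℝ) (ht : 0 < t) :
    ∃ C > 0, ∀ (j : ℕ) (x : sphere (0 : EuclideanSpace ℝ (Fin d)) 1),
      (∫ y, geodesicDist x y ^ t / (1 + 2 ^ j * geodesicDist x y) ^ ((d : ℝ) + t)
          ∂(sphereMeasure d))
        ≤ C * (2 : ℝ) ^ (-(j : ℝ) * (t + d - 1)) := by
  have hd2 : (2:ℝ) ≤ (d:ℝ) := by exact_mod_cast hd
  set A : ℝ := d * 2 ^ d with hA
  have hA0 : (0:ℝ) < A := by positivity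
  set s : ℝ := t + d - 1 with hsdef
  have hs0 : 0 < s := by simp only [hsdef]; linarith
  have h2s1 : (1:ℝ) ≤ (2:ℝ) ^ s := Real.one_le_rpow one_le_two hs0.le
  have h2s0 : (0:ℝ) < (2:ℝ) ^ s := Real.rpow_pos_of_pos two_pos _
  have hcast : ((d-1:ℕ):ℝ) = (d:ℝ) - 1 := by
    rw [Nat.cast_sub (by omega : 1 ≤ d), Nat.cast_one]
  -- combine rpow with natural power d-1
  have hz : ∀ z : ℝ, 0 < z → z ^ t * z ^ (d-1) = z ^ s := by
    intro z hz
    rw [← Real.rpow_natCast z (d-1), ← Real.rpow_add hz, hcast]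
    congr 1
    simp only [hsdef]; ring
  refine ⟨4 * A * (2:ℝ) ^ s, by positivity, fun j x => ?_⟩
  set μ := sphereMeasure d with hμ
  set ε : ℝ := (2:ℝ) ^ (-(j:ℝ)) with hεdef
  have hε : 0 < ε := Real.rpow_pos_of_pos two_pos _
  have hkey : (2:ℝ) ^ j * ε = 1 := by
    rw [hεdef, ← Real.rpow_natCast 2 j, ← Real.rpow_add two_pos]
    simp
  set ρ : ℕ → ℝ := fun k => (2:ℝ) ^ (k:ℝ) * ε with hρ
  have hρpos : ∀ k, 0 < ρ k := fun k => mul_pos (Real.rpow_pos_of_pos two_pos _) hε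
  have hjρ : ∀ k, (2:ℝ) ^ j * ρ k = (2:ℝ) ^ (k:ℝ) := by
    intro k
    simp only [hρ]
    calc (2:ℝ) ^ j * ((2:ℝ) ^ (k:ℝ) * ε) = (2:ℝ) ^ (k:ℝ) * ((2:ℝ) ^ j * ε) := by ring
      _ = (2:ℝ) ^ (k:ℝ) := by rw [hkey, mul_one]
  set gd : (sphere (0 : EuclideanSpace ℝ (Fin d)) 1) → ℝ := geodesicDist x with hgd
  have hgd0 : ∀ y, 0 ≤ gd y := fun y => Real.arccos_nonneg _
  set F : (sphere (0 : EuclideanSpace ℝ (Fin d)) 1) → ℝ :=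
    fun y => gd y ^ t / (1 + 2 ^ j * gd y) ^ ((d : ℝ) + t) with hF
  have hj0 : (0:ℝ) < 2 ^ j := by positivity
  have hbase1 : ∀ y, (1:ℝ) ≤ 1 + 2 ^ j * gd y := fun y => by nlinarith [hgd0 y]
  have hden_pos : ∀ y, (0:ℝ) < (1 + 2 ^ j * gd y) ^ ((d : ℝ) + t) :=
    fun y => Real.rpow_pos_of_pos (by nlinarith [hgd0 y]) _
  have hden_one : ∀ y, (1:ℝ) ≤ (1 + 2 ^ j * gd y) ^ ((d : ℝ) + t) :=
    fun y => Real.one_le_rpow (hbase1 y) (by positivity)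
  have hF0 : ∀ y, 0 ≤ F y := fun y => div_nonneg (Real.rpow_nonneg (hgd0 y) _) (hden_pos y).le
  have hFcont : Continuous F := by
    apply Continuous.div
    · exact (continuous_geodesicDist x).rpow_const (fun y => Or.inr ht.le)
    · exact (continuous_const.add (continuous_const.mul (continuous_geodesicDist x))).rpow_const
        (fun y => Or.inr (by positivity))
    · exact fun y => (hden_pos y).ne'
  have hcapmeas : ∀ r : ℝ, MeasurableSet {y | gd y ≤ r} := fun r =>
    (isClosed_le (continuous_geodesicDist x) continuous_const).measurableSet
  set B : ℕ → Set (sphere (0 : EuclideanSpace ℝ (Fin d)) 1) :=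
    fun k => Nat.casesOn k {y | gd y ≤ ρ 0}
      (fun m => {y | gd y ≤ ρ (m+1)} \ {y | gd y ≤ ρ m}) with hB
  have hBsub : ∀ k, B k ⊆ {y | gd y ≤ ρ k} := by
    intro k
    cases k with
    | zero => exact subset_rfl
    | succ m => exact Set.diff_subset
  have hunion : (⋃ k, B k) = Set.univ := by
    apply Set.eq_univ_of_forall
    intro y
    have hex : ∃ n, gd y ≤ ρ n := by
      refine ⟨j + 2, ?_⟩
      have h1 : gd y ≤ π := Real.arccos_le_pi _
      have h2 : ρ (j+2) = 4 := by
        simp only [hρ]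
        have h3 : ((j+2:ℕ):ℝ) = (j:ℝ) + 2 := by push_cast; ring
        rw [h3, Real.rpow_add two_pos, Real.rpow_natCast, Real.rpow_two]
        nlinarith [hkey]
      rw [h2]
      linarith [Real.pi_le_four]
    rw [Set.mem_iUnion]
    rcases Nat.eq_zero_or_eq_succ_pred (Nat.find hex) with h0 | hsucc
    · exact ⟨0, by have := Nat.find_spec hex; rwa [h0] at this⟩
    · refine ⟨Nat.find hex, ?_⟩
      set m := (Nat.find hex) - 1 with hm
      rw [hB]
      rw [hsucc]
      refine ⟨?_, ?_⟩
      · have := Nat.find_spec hex; rwa [hsucc] at this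
      · intro hmem
        exact Nat.find_min hex (by omega) hmem
  -- generic bound over shells
  have hcapμ := cap_bound d hd x
  have hshell : ∀ (k : ℕ) (c r : ℝ), 0 ≤ c → 0 < r → (∀ y ∈ B k, F y ≤ c) →
      (B k ⊆ {y | gd y ≤ r}) →
      ∫⁻ y in B k, ENNReal.ofReal (F y) ∂μ ≤ ENNReal.ofReal (c * (A * r ^ (d-1))) := by
    intro k c r hc0 hrpos hc hsub
    calc ∫⁻ y in B k, ENNReal.ofReal (F y) ∂μ
        ≤ ∫⁻ _ in B k, ENNReal.ofReal c ∂μ :=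
          setLIntegral_mono measurable_const (fun y hy => ENNReal.ofReal_le_ofReal (hc y hy))
      _ = ENNReal.ofReal c * μ (B k) := setLIntegral_const _ _
      _ ≤ ENNReal.ofReal c * ENNReal.ofReal (A * r ^ (d-1)) :=
          mul_le_mul_right ((measure_mono hsub).trans (hcapμ r hrpos)) _
      _ = ENNReal.ofReal (c * (A * r ^ (d-1))) := (ENNReal.ofReal_mul hc0).symm
  set D : ℝ≥0∞ := ENNReal.ofReal (2 * (A * (2:ℝ) ^ s * ε ^ s)) with hD
  have h2e : (2⁻¹ : ℝ≥0∞) = ENNReal.ofReal (2⁻¹ : ℝ) := by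
    rw [ENNReal.ofReal_inv_of_pos two_pos, ENNReal.ofReal_ofNat]
  have hterm : ∀ k, ∫⁻ y in B k, ENNReal.ofReal (F y) ∂μ ≤ D * (2⁻¹ : ℝ≥0∞) ^ k := by
    intro k
    cases k with
    | zero =>
        have hρ0 : ρ 0 = ε := by simp [hρ]
        have hc : ∀ y ∈ B 0, F y ≤ ε ^ t := by
          intro y hy
          have h1 : gd y ≤ ε := by rw [← hρ0]; exact hBsub 0 hy
          calc F y ≤ gd y ^ t := by
                rw [hF]
                exact div_le_self (Real.rpow_nonneg (hgd0 y) t) (hden_one y)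
            _ ≤ ε ^ t := Real.rpow_le_rpow (hgd0 y) h1 ht.le
        refine (hshell 0 (ε ^ t) ε (Real.rpow_nonneg hε.le t) hε hc
          (by rw [← hρ0]; exact hBsub 0)).trans ?_
        rw [pow_zero, mul_one, hD]
        apply ENNReal.ofReal_le_ofReal
        have he1 : ε ^ t * ε ^ (d-1) = ε ^ s := hz ε hε
        have hεs : 0 < ε ^ s := Real.rpow_pos_of_pos hε s
        have h1 : ε ^ t * (A * ε ^ (d-1)) = A * ε ^ s := by rw [← he1]; ring
        rw [h1]
        have h2 : A * ε ^ s * 1 ≤ A * ε ^ s * (2 * 2 ^ s) :=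
          mul_le_mul_of_nonneg_left (by linarith) (mul_pos hA0 hεs).le
        nlinarith [h2]
    | succ m =>
        have hmem : ∀ y ∈ B (m+1), ρ m < gd y ∧ gd y ≤ ρ (m+1) := by
          intro y hy
          rw [hB] at hy
          exact ⟨lt_of_not_ge hy.2, hy.1⟩
        set c : ℝ := ρ (m+1) ^ t / ((2:ℝ) ^ (m:ℝ)) ^ ((d:ℝ) + t) with hc
        have h2m : (0:ℝ) < (2:ℝ) ^ (m:ℝ) := Real.rpow_pos_of_pos two_pos _
        have hcden : (0:ℝ) < ((2:ℝ) ^ (m:ℝ)) ^ ((d:ℝ)+t) := Real.rpow_pos_of_pos h2m _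
        have hc0 : 0 ≤ c := div_nonneg (Real.rpow_nonneg (hρpos _).le _) hcden.le
        have hFb : ∀ y ∈ B (m+1), F y ≤ c := by
          intro y hy
          obtain ⟨hlt, hle⟩ := hmem y hy
          rw [hF, hc]
          apply div_le_div₀ (Real.rpow_nonneg (hρpos _).le _)
            (Real.rpow_le_rpow (hgd0 y) hle ht.le) hcden
          apply Real.rpow_le_rpow h2m.le ?_ (by positivity)
          have h3 := hjρ m
          nlinarith [mul_le_mul_of_nonneg_left hlt.le hj0.le]
        refine (hshell (m+1) c (ρ (m+1)) hc0 (hρpos _) hFb (hBsub (m+1))).trans ?_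
        -- arithmetic
        have hρs : ρ (m+1) ^ t * ρ (m+1) ^ (d-1) = ρ (m+1) ^ s := hz _ (hρpos _)
        have hval : c * (A * ρ (m+1) ^ (d-1))
            = A * ((ρ (m+1) ^ t * ρ (m+1) ^ (d-1)) / ((2:ℝ) ^ (m:ℝ)) ^ ((d:ℝ)+t)) := by
          rw [hc]; field_simp
        have hρs2 : ρ (m+1) ^ s = (2:ℝ) ^ ((((m+1:ℕ)):ℝ) * s) * ε ^ s := by
          simp only [hρ]
          rw [Real.mul_rpow (Real.rpow_nonneg (by norm_num) _) hε.le,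
            ← Real.rpow_mul (by norm_num : (0:ℝ) ≤ 2)]
        have hden2 : ((2:ℝ) ^ (m:ℝ)) ^ ((d:ℝ)+t) = (2:ℝ) ^ ((m:ℝ) * ((d:ℝ)+t)) := by
          rw [← Real.rpow_mul (by norm_num : (0:ℝ) ≤ 2)]
        have hfrac : (2:ℝ) ^ ((((m+1:ℕ)):ℝ) * s) / (2:ℝ) ^ ((m:ℝ) * ((d:ℝ)+t))
            = (2:ℝ) ^ s * (2:ℝ) ^ (-(m:ℝ)) := by
          rw [← Real.rpow_add two_pos, ← Real.rpow_sub two_pos]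
          congr 1
          push_cast
          simp only [hsdef]; ring
        have hL : c * (A * ρ (m+1) ^ (d-1))
            = A * ((2:ℝ) ^ s * (2:ℝ) ^ (-(m:ℝ)) * ε ^ s) := by
          rw [hval, hρs, hρs2, hden2]
          rw [show ((2:ℝ) ^ ((((m+1:ℕ)):ℝ) * s) * ε ^ s) / (2:ℝ) ^ ((m:ℝ) * ((d:ℝ)+t))
              = ((2:ℝ) ^ ((((m+1:ℕ)):ℝ) * s) / (2:ℝ) ^ ((m:ℝ) * ((d:ℝ)+t))) * ε ^ s by ring,
            hfrac]
        have hp : ((2:ℝ)⁻¹) ^ (m+1) = (2:ℝ) ^ (-(((m+1:ℕ)):ℝ)) := by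
          rw [Real.rpow_neg (by norm_num : (0:ℝ) ≤ 2), Real.rpow_natCast, inv_pow]
        have hq : (2:ℝ) ^ (-(((m+1:ℕ)):ℝ)) * (2:ℝ) ^ (1:ℝ) = (2:ℝ) ^ (-(m:ℝ)) := by
          rw [← Real.rpow_add two_pos]
          congr 1
          push_cast
          ring
        rw [Real.rpow_one] at hq
        have hR : 2 * (A * (2:ℝ) ^ s * ε ^ s) * (((2:ℝ)⁻¹) ^ (m+1))
            = A * ((2:ℝ) ^ s * (2:ℝ) ^ (-(m:ℝ)) * ε ^ s) := by
          rw [hp]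
          linear_combination (A * (2:ℝ) ^ s * ε ^ s) * hq
        calc ENNReal.ofReal (c * (A * ρ (m+1) ^ (d-1)))
            = ENNReal.ofReal (2 * (A * (2:ℝ) ^ s * ε ^ s) * (((2:ℝ)⁻¹) ^ (m+1))) := by
              rw [hL, hR]
          _ = D * (2⁻¹ : ℝ≥0∞) ^ (m+1) := by
              rw [hD, h2e, ← ENNReal.ofReal_pow (by norm_num), ← ENNReal.ofReal_mul (by positivity)]
          _ ≤ D * (2⁻¹ : ℝ≥0∞) ^ (m+1) := le_rfl
  have htot : ∫⁻ y, ENNReal.ofReal (F y) ∂μ ≤ D * 2 := by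
    have h1 : ∫⁻ y, ENNReal.ofReal (F y) ∂μ = ∫⁻ y in ⋃ k, B k, ENNReal.ofReal (F y) ∂μ := by
      rw [hunion, Measure.restrict_univ]
    rw [h1]
    refine (lintegral_iUnion_le _ _).trans ?_
    calc ∑' k, ∫⁻ y in B k, ENNReal.ofReal (F y) ∂μ
        ≤ ∑' k, D * (2⁻¹:ℝ≥0∞)^k := ENNReal.tsum_le_tsum hterm
      _ = D * ∑' k, (2⁻¹:ℝ≥0∞)^k := ENNReal.tsum_mul_left
      _ = D * 2 := by rw [ENNReal.tsum_geometric, ENNReal.one_sub_inv_two, inv_inv]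
  have hint : ∫ y, F y ∂μ = (∫⁻ y, ENNReal.ofReal (F y) ∂μ).toReal :=
    integral_eq_lintegral_of_nonneg_ae (Filter.Eventually.of_forall hF0)
      hFcont.aestronglyMeasurable
  have hDval : D * 2 = ENNReal.ofReal (4 * A * (2:ℝ)^s * (ε ^ s)) := by
    rw [hD, ← ENNReal.ofReal_ofNat 2, ← ENNReal.ofReal_mul (by positivity)]
    congr 1; ring
  rw [hint]
  calc (∫⁻ y, ENNReal.ofReal (F y) ∂μ).toReal
      ≤ (ENNReal.ofReal (4 * A * (2:ℝ)^s * (ε ^ s))).toReal :=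
        ENNReal.toReal_mono ENNReal.ofReal_ne_top (hDval ▸ htot)
    _ = 4 * A * (2:ℝ)^s * (ε ^ s) := ENNReal.toReal_ofReal (by positivity)
    _ = 4 * A * (2:ℝ)^s * (2:ℝ) ^ (-(j:ℝ) * s) := by
        rw [hεdef, ← Real.rpow_mul (by norm_num : (0:ℝ) ≤ 2)]
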